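/- If f is a modular form of weight 2k and g is a modular form of weight 2l for a subgroup Γ of SL_2(ℝ), then [f,g]_n satisfies the modularity condition of weight 2k+2l+2n for Γ: ([f,g]_n)|_{2k+2l+2n} γ = [f,g]_n for all γ ∈ Γ. -/

import Mathlib

open Finset

private def rcα (k r i : ℕ) : ℕ := r.choose i * (r - i).factorial * (2 * k + r - 1).choose (r - i)

private lemma rcα_self (k r : ℕ) : rcα k r r = 1 := by simp [rcα]

private lemma rcα_zero_of_lt {r i : ℕ} (h : r < i) (k : ℕ) : rcα k r i = 0 := by
  simp [rcα, Nat.choose_eq_zero_of_lt h]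

private lemma rcα_cast (k r i : ℕ) (hk : 1 ≤ k) (h : i ≤ r) :
    (rcα k r i : ℂ) = (r.factorial * (2 * k + r - 1).factorial) /
      (i.factorial * (r - i).factorial * (2 * k + i - 1).factorial) := by
  have h1 : r - i ≤ 2 * k + r - 1 := by omega
  have h2 : 2 * k + r - 1 - (r - i) = 2 * k + i - 1 := by omega
  rw [rcα]
  push_cast
  rw [Nat.cast_choose ℂ h, Nat.cast_choose ℂ h1, h2]
  have e1 : (i.factorial : ℂ) ≠ 0 := Nat.cast_ne_zero.mpr (Nat.factorial_ne_zero _)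
  have e2 : ((r - i).factorial : ℂ) ≠ 0 := Nat.cast_ne_zero.mpr (Nat.factorial_ne_zero _)
  have e3 : ((2 * k + i - 1).factorial : ℂ) ≠ 0 := Nat.cast_ne_zero.mpr (Nat.factorial_ne_zero _)
  field_simp

private lemma rcα_cast' (k' u i : ℕ) :
    (rcα (k' + 1) (i + u) i : ℂ) = ((i + u).factorial * (2 * k' + i + u + 1).factorial) /
      (i.factorial * u.factorial * (2 * k' + i + 1).factorial) := by
  rw [rcα_cast (k' + 1) (i + u) i (by omega) (by omega)]
  have h1 : 2 * (k' + 1) + (i + u) - 1 = 2 * k' + i + u + 1 := by omega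
  have h2 : i + u - i = u := by omega
  have h3 : 2 * (k' + 1) + i - 1 = 2 * k' + i + 1 := by omega
  rw [h1, h2, h3]

private lemma rcα_rec0 (k r : ℕ) (hk : 1 ≤ k) :
    (rcα k (r + 1) 0 : ℂ) = (2 * k + r) * rcα k r 0 := by
  obtain ⟨k', rfl⟩ : ∃ k', k = k' + 1 := ⟨k - 1, by omega⟩
  have g1 := rcα_cast' k' (r + 1) 0
  have g2 := rcα_cast' k' r 0
  simp only [Nat.zero_add] at g1 g2
  rw [g1, g2]
  have A1 : (((r + 1).factorial : ℕ) : ℂ) = ((r : ℂ) + 1) * (r.factorial : ℕ) := by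
    rw [Nat.factorial_succ]; push_cast; ring
  have A2 : (((2 * k' + 0 + (r + 1) + 1).factorial : ℕ) : ℂ) =
      (2 * (k' : ℂ) + r + 2) * ((2 * k' + 0 + r + 1).factorial : ℕ) := by
    rw [show 2 * k' + 0 + (r + 1) + 1 = (2 * k' + 0 + r + 1) + 1 from by omega,
      Nat.factorial_succ]; push_cast; ring
  rw [A1, A2]
  have e0 : ((Nat.factorial 0 : ℕ) : ℂ) ≠ 0 := Nat.cast_ne_zero.mpr (Nat.factorial_ne_zero _)
  have e1 : ((r.factorial : ℕ) : ℂ) ≠ 0 := Nat.cast_ne_zero.mpr (Nat.factorial_ne_zero _)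
  have e2 : (((2 * k' + 0 + 1).factorial : ℕ) : ℂ) ≠ 0 :=
    Nat.cast_ne_zero.mpr (Nat.factorial_ne_zero _)
  have e3 : ((r : ℂ) + 1) ≠ 0 := Nat.cast_add_one_ne_zero r
  have hD : ((Nat.factorial 0 : ℕ) : ℂ) * (((r : ℂ) + 1) * (r.factorial : ℕ)) *
      (((2 * k' + 0 + 1).factorial : ℕ) : ℂ) ≠ 0 :=
    mul_ne_zero (mul_ne_zero e0 (mul_ne_zero e3 e1)) e2
  have hD2 : ((Nat.factorial 0 : ℕ) : ℂ) * ((r.factorial : ℕ) : ℂ) *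
      (((2 * k' + 0 + 1).factorial : ℕ) : ℂ) ≠ 0 := mul_ne_zero (mul_ne_zero e0 e1) e2
  rw [← mul_div_assoc, div_eq_div_iff hD hD2]
  push_cast
  ring

set_option maxHeartbeats 1000000 in
private lemma rcα_rec (k r i : ℕ) (hk : 1 ≤ k) (h : i ≤ r) :
    (rcα k (r + 1) (i + 1) : ℂ) = (2 * k + r + i + 1) * rcα k r (i + 1) + rcα k r i := by
  obtain ⟨k', rfl⟩ : ∃ k', k = k' + 1 := ⟨k - 1, by omega⟩
  rcases eq_or_lt_of_le h with rfl | h'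
  · rw [rcα_self, rcα_self, rcα_zero_of_lt (by omega)]
    push_cast; ring
  · obtain ⟨u, rfl⟩ : ∃ u, r = (i + 1) + u := ⟨r - (i + 1), by omega⟩
    have g1 := rcα_cast' k' (u + 1) (i + 1)
    have g2 := rcα_cast' k' u (i + 1)
    have g3 := rcα_cast' k' (u + 1) i
    rw [show i + 1 + u + 1 = i + 1 + (u + 1) from by ring, g1, g2,
      show (i + 1 + u : ℕ) = i + (u + 1) from by ring, g3]
    have A1 : (((i + 1 + (u + 1)).factorial : ℕ) : ℂ) =
        ((i : ℂ) + u + 2) * ((i + (u + 1)).factorial : ℕ) := by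
      rw [show i + 1 + (u + 1) = (i + (u + 1)) + 1 from by ring, Nat.factorial_succ]
      push_cast; ring
    have A2 : (((2 * k' + (i + 1) + (u + 1) + 1).factorial : ℕ) : ℂ) =
        (2 * (k' : ℂ) + i + u + 3) * ((2 * k' + i + (u + 1) + 1).factorial : ℕ) := by
      rw [show 2 * k' + (i + 1) + (u + 1) + 1 = (2 * k' + i + (u + 1) + 1) + 1 from by omega,
        Nat.factorial_succ]
      push_cast; ring
    have A4 : (((2 * k' + (i + 1) + u + 1).factorial : ℕ) : ℂ) =
        (((2 * k' + i + (u + 1) + 1).factorial : ℕ) : ℂ) := by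
      norm_num; congr 1; omega
    have A5 : (((i + 1).factorial : ℕ) : ℂ) = ((i : ℂ) + 1) * (i.factorial : ℕ) := by
      rw [Nat.factorial_succ]; push_cast; ring
    have A6 : (((u + 1).factorial : ℕ) : ℂ) = ((u : ℂ) + 1) * (u.factorial : ℕ) := by
      rw [Nat.factorial_succ]; push_cast; ring
    have A7 : (((2 * k' + (i + 1) + 1).factorial : ℕ) : ℂ) =
        (2 * (k' : ℂ) + i + 2) * ((2 * k' + i + 1).factorial : ℕ) := by
      rw [show 2 * k' + (i + 1) + 1 = (2 * k' + i + 1) + 1 from by omega, Nat.factorial_succ]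
      push_cast; ring
    rw [A1, A2, A4, A5, A6, A7]
    have e1 : ((i.factorial : ℕ) : ℂ) ≠ 0 := Nat.cast_ne_zero.mpr (Nat.factorial_ne_zero _)
    have e2 : ((u.factorial : ℕ) : ℂ) ≠ 0 := Nat.cast_ne_zero.mpr (Nat.factorial_ne_zero _)
    have e3 : (((2 * k' + i + 1).factorial : ℕ) : ℂ) ≠ 0 :=
      Nat.cast_ne_zero.mpr (Nat.factorial_ne_zero _)
    have e4 : ((i : ℂ) + 1) ≠ 0 := Nat.cast_add_one_ne_zero i
    have e5 : ((u : ℂ) + 1) ≠ 0 := Nat.cast_add_one_ne_zero u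
    have e6 : (2 * (k' : ℂ) + i + 2) ≠ 0 := by
      have : (2 * (k' : ℂ) + i + 2) = ((2 * k' + i + 2 : ℕ) : ℂ) := by push_cast; ring
      rw [this]; exact Nat.cast_ne_zero.mpr (by omega)
    have h1 : ((i : ℂ) + 1) * (i.factorial : ℕ) * (((u : ℂ) + 1) * (u.factorial : ℕ)) *
        ((2 * (k' : ℂ) + i + 2) * ((2 * k' + i + 1).factorial : ℕ)) ≠ 0 :=
      mul_ne_zero (mul_ne_zero (mul_ne_zero e4 e1) (mul_ne_zero e5 e2)) (mul_ne_zero e6 e3)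
    have h2 : ((i : ℂ) + 1) * (i.factorial : ℕ) * ((u.factorial : ℕ) : ℂ) *
        ((2 * (k' : ℂ) + i + 2) * ((2 * k' + i + 1).factorial : ℕ)) ≠ 0 :=
      mul_ne_zero (mul_ne_zero (mul_ne_zero e4 e1) e2) (mul_ne_zero e6 e3)
    have h3 : ((i.factorial : ℕ) : ℂ) * (((u : ℂ) + 1) * (u.factorial : ℕ)) *
        (((2 * k' + i + 1).factorial : ℕ) : ℂ) ≠ 0 :=
      mul_ne_zero (mul_ne_zero e1 (mul_ne_zero e5 e2)) e3
    rw [← mul_div_assoc]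
    rw [div_add_div _ _ h2 h3, div_eq_div_iff h1 (mul_ne_zero h2 h3)]
    push_cast
    ring

set_option maxHeartbeats 1000000 in
private lemma comb_term (k l n i j r : ℕ) (hk : 1 ≤ k) (hl : 1 ≤ l)
    (hir : i ≤ r) (hrj : r + j ≤ n) :
    (((n + 2 * k - 1).choose (n - r) : ℂ)) * ((n + 2 * l - 1).choose r : ℂ) *
      (rcα k r i : ℂ) * (rcα l (n - r) j : ℂ) =
    (((n + 2 * k - 1).factorial : ℂ) * ((n + 2 * l - 1).factorial : ℂ) /
      ((i.factorial : ℂ) * (j.factorial : ℂ) * ((2 * k + i - 1).factorial : ℂ) *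
        ((2 * l + j - 1).factorial : ℂ) * ((n - i - j).factorial : ℂ))) *
      ((n - i - j).choose (r - i) : ℂ) := by
  rw [Nat.cast_choose ℂ (show n - r ≤ n + 2 * k - 1 by omega),
    Nat.cast_choose ℂ (show r ≤ n + 2 * l - 1 by omega),
    Nat.cast_choose ℂ (show r - i ≤ n - i - j by omega),
    rcα_cast k r i hk hir, rcα_cast l (n - r) j hl (by omega),
    show n + 2 * k - 1 - (n - r) = 2 * k + r - 1 by omega,
    show n + 2 * l - 1 - r = 2 * l + (n - r) - 1 by omega,
    show n - i - j - (r - i) = n - r - j by omega]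
  have n1 : ((i.factorial : ℕ) : ℂ) ≠ 0 := Nat.cast_ne_zero.mpr (Nat.factorial_ne_zero _)
  have n2 : ((j.factorial : ℕ) : ℂ) ≠ 0 := Nat.cast_ne_zero.mpr (Nat.factorial_ne_zero _)
  have n3 : ((r.factorial : ℕ) : ℂ) ≠ 0 := Nat.cast_ne_zero.mpr (Nat.factorial_ne_zero _)
  have n4 : (((r - i).factorial : ℕ) : ℂ) ≠ 0 := Nat.cast_ne_zero.mpr (Nat.factorial_ne_zero _)
  have n5 : (((n - r).factorial : ℕ) : ℂ) ≠ 0 := Nat.cast_ne_zero.mpr (Nat.factorial_ne_zero _)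
  have n6 : (((n - r - j).factorial : ℕ) : ℂ) ≠ 0 := Nat.cast_ne_zero.mpr (Nat.factorial_ne_zero _)
  have n7 : (((2 * k + r - 1).factorial : ℕ) : ℂ) ≠ 0 :=
    Nat.cast_ne_zero.mpr (Nat.factorial_ne_zero _)
  have n8 : (((2 * k + i - 1).factorial : ℕ) : ℂ) ≠ 0 :=
    Nat.cast_ne_zero.mpr (Nat.factorial_ne_zero _)
  have n9 : (((2 * l + j - 1).factorial : ℕ) : ℂ) ≠ 0 :=
    Nat.cast_ne_zero.mpr (Nat.factorial_ne_zero _)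
  have n10 : (((2 * l + (n - r) - 1).factorial : ℕ) : ℂ) ≠ 0 :=
    Nat.cast_ne_zero.mpr (Nat.factorial_ne_zero _)
  have n11 : (((n - i - j).factorial : ℕ) : ℂ) ≠ 0 :=
    Nat.cast_ne_zero.mpr (Nat.factorial_ne_zero _)
  rw [div_mul_div_comm, div_mul_div_comm, div_mul_div_comm, div_mul_div_comm]
  rw [div_eq_div_iff
    (mul_ne_zero (mul_ne_zero (mul_ne_zero (mul_ne_zero n5 n7) (mul_ne_zero n3 n10))
      (mul_ne_zero (mul_ne_zero n1 n4) n8)) (mul_ne_zero (mul_ne_zero n2 n6) n9))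
    (mul_ne_zero (mul_ne_zero (mul_ne_zero (mul_ne_zero (mul_ne_zero n1 n2) n8) n9) n11)
      (mul_ne_zero n4 n6))]
  ring

private lemma comb_sum (k l n i j : ℕ) (hk : 1 ≤ k) (hl : 1 ≤ l) (hij : i + j < n) :
    ∑ r ∈ range (n + 1), ((-1 : ℂ) ^ r * ((n + 2 * k - 1).choose (n - r) : ℂ) *
      ((n + 2 * l - 1).choose r : ℂ) * (rcα k r i : ℂ) * (rcα l (n - r) j : ℂ)) = 0 := by
  have hsub : Finset.Icc i (n - j) ⊆ range (n + 1) := by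
    intro r hr
    simp only [Finset.mem_Icc] at hr
    simp only [Finset.mem_range]
    omega
  rw [← Finset.sum_subset hsub (by
    intro r hr0 hr
    simp only [Finset.mem_range] at hr0
    simp only [Finset.mem_Icc, not_and, not_le] at hr
    rcases le_or_gt i r with h | h
    · have : n - r < j := by have := hr h; omega
      rw [rcα_zero_of_lt this l]
      push_cast
      ring
    · rw [rcα_zero_of_lt h k]
      push_cast
      ring)]
  have hstep : ∀ r ∈ Finset.Icc i (n - j),
      (-1 : ℂ) ^ r * ((n + 2 * k - 1).choose (n - r) : ℂ) * ((n + 2 * l - 1).choose r : ℂ) *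
        (rcα k r i : ℂ) * (rcα l (n - r) j : ℂ) =
      (((n + 2 * k - 1).factorial : ℂ) * ((n + 2 * l - 1).factorial : ℂ) /
        ((i.factorial : ℂ) * (j.factorial : ℂ) * ((2 * k + i - 1).factorial : ℂ) *
          ((2 * l + j - 1).factorial : ℂ) * ((n - i - j).factorial : ℂ))) *
        ((-1 : ℂ) ^ r * ((n - i - j).choose (r - i) : ℂ)) := by
    intro r hr
    simp only [Finset.mem_Icc] at hr
    have := comb_term k l n i j r hk hl hr.1 (by omega)
    calc (-1 : ℂ) ^ r * ((n + 2 * k - 1).choose (n - r) : ℂ) * ((n + 2 * l - 1).choose r : ℂ) *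
        (rcα k r i : ℂ) * (rcα l (n - r) j : ℂ)
        = (-1 : ℂ) ^ r * (((n + 2 * k - 1).choose (n - r) : ℂ) * ((n + 2 * l - 1).choose r : ℂ) *
          (rcα k r i : ℂ) * (rcα l (n - r) j : ℂ)) := by ring
      _ = _ := by rw [this]; ring
  rw [Finset.sum_congr rfl hstep, ← Finset.mul_sum]
  rw [← Finset.Ico_add_one_right_eq_Icc, Finset.sum_Ico_eq_sum_range]
  have harg : ∀ u, i + u - i = u := fun u => by omega
  have hcard : n - j + 1 - i = (n - i - j) + 1 := by omega
  have hzero : ∑ u ∈ range ((n - i - j) + 1), (-1 : ℂ) ^ (i + u) *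
      ((n - i - j).choose (i + u - i) : ℂ) = 0 := by
    have h1 : ∀ u, (-1 : ℂ) ^ (i + u) * ((n - i - j).choose (i + u - i) : ℂ) =
        (-1 : ℂ) ^ i * ((-1 : ℂ) ^ u * ((n - i - j).choose u : ℂ)) := by
      intro u
      rw [harg u, pow_add]
      ring
    rw [Finset.sum_congr rfl (fun u _ => h1 u), ← Finset.mul_sum]
    have h2 : ((∑ u ∈ range ((n - i - j) + 1), (-1) ^ u * ((n - i - j).choose u : ℤ) : ℤ) : ℂ)
        = 0 := by
      rw [Int.alternating_sum_range_choose_of_ne (show n - i - j ≠ 0 by omega)]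
      simp
    push_cast at h2
    rw [h2, mul_zero]
  rw [hcard, hzero, mul_zero]

private lemma upper_isOpen : IsOpen {z : ℂ | 0 < z.im} :=
  isOpen_lt continuous_const Complex.continuous_im

private lemma denom_ne (a b c d : ℝ) (hdet : a * d - b * c = 1) (z : ℂ) (hz : 0 < z.im) :
    (c : ℂ) * z + d ≠ 0 := by
  intro h
  have him : c * z.im = 0 := by
    have := congrArg Complex.im h
    simpa using this
  have hc : c = 0 := by
    rcases mul_eq_zero.mp him with h' | h'
    · exact h'
    · exact absurd h' hz.ne'
  have hre : c * z.re + d = 0 := by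
    have := congrArg Complex.re h
    simpa using this
  have hd : d = 0 := by rw [hc] at hre; linarith
  rw [hc, hd] at hdet
  norm_num at hdet

private lemma sigma_im (a b c d : ℝ) (hdet : a * d - b * c = 1) (z : ℂ) (hz : 0 < z.im) :
    0 < (((a : ℂ) * z + b) / ((c : ℂ) * z + d)).im := by
  have hne := denom_ne a b c d hdet z hz
  have hnq : 0 < Complex.normSq ((c : ℂ) * z + d) := Complex.normSq_pos.mpr hne
  have key : (((a : ℂ) * z + b) / ((c : ℂ) * z + d)).im =
      z.im / Complex.normSq ((c : ℂ) * z + d) := by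
    rw [Complex.div_im]
    simp only [Complex.add_im, Complex.add_re, Complex.mul_im, Complex.mul_re,
      Complex.ofReal_im, Complex.ofReal_re]
    field_simp
    ring_nf
    nlinarith [hdet, sq_nonneg z.re, sq_nonneg z.im]
  rw [key]
  exact div_pos hz hnq

private lemma hasDerivAt_sigma (a b c d : ℝ) (hdet : a * d - b * c = 1) (z : ℂ)
    (hz : 0 < z.im) :
    HasDerivAt (fun w : ℂ => ((a : ℂ) * w + b) / ((c : ℂ) * w + d))
      ((((c : ℂ) * z + d) ^ 2)⁻¹) z := by
  have h1 : HasDerivAt (fun w : ℂ => (a : ℂ) * w + b) a z := by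
    simpa using ((hasDerivAt_id z).const_mul (a : ℂ)).add_const (b : ℂ)
  have h2 : HasDerivAt (fun w : ℂ => (c : ℂ) * w + d) c z := by
    simpa using ((hasDerivAt_id z).const_mul (c : ℂ)).add_const (d : ℂ)
  have hne := denom_ne a b c d hdet z hz
  have h3 := h1.div h2 hne
  refine h3.congr_deriv (Eq.symm ?_)
  have hdetC : (a : ℂ) * d - b * c = 1 := by exact_mod_cast hdet
  rw [inv_eq_one_div, div_eq_div_iff (pow_ne_zero 2 hne) (pow_ne_zero 2 hne)]
  linear_combination (-(((c : ℂ) * z + d) ^ 2)) * hdetC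

private lemma iterated_analytic (f : ℂ → ℂ) (hf : DifferentiableOn ℂ f {z : ℂ | 0 < z.im})
    (r : ℕ) : AnalyticOnNhd ℂ (iteratedDeriv r f) {z : ℂ | 0 < z.im} := by
  induction r with
  | zero => simpa [iteratedDeriv_zero] using hf.analyticOnNhd upper_isOpen
  | succ r ih => rw [iteratedDeriv_succ]; exact ih.deriv

private lemma alg_step (k r : ℕ) (hk : 1 ≤ k) (c J : ℂ) (F : ℕ → ℂ) :
    (∑ i ∈ range (r + 1),
      (((2 * k + r + i : ℕ) : ℂ) * (rcα k r i : ℂ) * c ^ (r + 1 - i) * J ^ (2 * k + r + 1 + i) * F i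
        + (rcα k r i : ℂ) * c ^ (r - i) * J ^ (2 * k + r + i + 2) * F (i + 1))) =
    ∑ i ∈ range (r + 2),
      (rcα k (r + 1) i : ℂ) * c ^ (r + 1 - i) * J ^ (2 * k + (r + 1) + i) * F i := by
  have hT : ∀ i ∈ range (r + 1),
      (rcα k (r + 1) (i + 1) : ℂ) * c ^ (r + 1 - (i + 1)) * J ^ (2 * k + (r + 1) + (i + 1)) *
        F (i + 1) =
      (rcα k r i : ℂ) * c ^ (r - i) * J ^ (2 * k + r + i + 2) * F (i + 1) +
        ((2 * k + r + i + 1 : ℕ) : ℂ) * (rcα k r (i + 1) : ℂ) * c ^ (r - i) *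
          J ^ (2 * k + r + i + 2) * F (i + 1) := by
    intro i hi
    simp only [Finset.mem_range] at hi
    have h1 : r + 1 - (i + 1) = r - i := by omega
    have h2 : 2 * k + (r + 1) + (i + 1) = 2 * k + r + i + 2 := by omega
    rw [h1, h2, rcα_rec k r i hk (by omega)]
    push_cast
    ring
  have hP : ∀ i ∈ range r,
      ((2 * k + r + (i + 1) : ℕ) : ℂ) * (rcα k r (i + 1) : ℂ) * c ^ (r + 1 - (i + 1)) *
        J ^ (2 * k + r + 1 + (i + 1)) * F (i + 1) =
      ((2 * k + r + i + 1 : ℕ) : ℂ) * (rcα k r (i + 1) : ℂ) * c ^ (r - i) *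
        J ^ (2 * k + r + i + 2) * F (i + 1) := by
    intro i hi
    have h1 : r + 1 - (i + 1) = r - i := by omega
    have h2 : 2 * k + r + 1 + (i + 1) = 2 * k + r + i + 2 := by omega
    have h3 : 2 * k + r + (i + 1) = 2 * k + r + i + 1 := by omega
    rw [h1, h2, h3]
  have hT0 : (rcα k (r + 1) 0 : ℂ) * c ^ (r + 1 - 0) * J ^ (2 * k + (r + 1) + 0) * F 0 =
      ((2 * k + r + 0 : ℕ) : ℂ) * (rcα k r 0 : ℂ) * c ^ (r + 1 - 0) * J ^ (2 * k + r + 1 + 0) *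
        F 0 := by
    rw [rcα_rec0 k r hk]
    have h2 : 2 * k + (r + 1) + 0 = 2 * k + r + 1 + 0 := by omega
    rw [h2]
    push_cast
    ring
  rw [Finset.sum_add_distrib,
    Finset.sum_range_succ' (fun i => (rcα k (r + 1) i : ℂ) * c ^ (r + 1 - i) *
      J ^ (2 * k + (r + 1) + i) * F i) (r + 1),
    Finset.sum_congr rfl hT, Finset.sum_add_distrib, hT0,
    Finset.sum_range_succ' (fun i => ((2 * k + r + i : ℕ) : ℂ) * (rcα k r i : ℂ) *
      c ^ (r + 1 - i) * J ^ (2 * k + r + 1 + i) * F i) r,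
    Finset.sum_congr rfl hP,
    Finset.sum_range_succ (fun i => ((2 * k + r + i + 1 : ℕ) : ℂ) * (rcα k r (i + 1) : ℂ) *
      c ^ (r - i) * J ^ (2 * k + r + i + 2) * F (i + 1)) r,
    rcα_zero_of_lt (show r < r + 1 by omega) k]
  push_cast
  ring

private lemma transform (k : ℕ) (hk : 1 ≤ k) (a b c d : ℝ) (hdet : a * d - b * c = 1)
    (f : ℂ → ℂ) (hf : DifferentiableOn ℂ f {z : ℂ | 0 < z.im})
    (hmod : ∀ z : ℂ, 0 < z.im →
      f (((a : ℂ) * z + b) / ((c : ℂ) * z + d)) = ((c : ℂ) * z + d) ^ (2 * k) * f z) :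
    ∀ r : ℕ, ∀ z : ℂ, 0 < z.im →
      iteratedDeriv r f (((a : ℂ) * z + b) / ((c : ℂ) * z + d)) =
      ∑ i ∈ range (r + 1), (rcα k r i : ℂ) * (c : ℂ) ^ (r - i) *
        ((c : ℂ) * z + d) ^ (2 * k + r + i) * iteratedDeriv i f z := by
  intro r
  induction r with
  | zero =>
    intro z hz
    rw [Finset.sum_range_one, iteratedDeriv_zero, rcα_self]
    norm_num
    simpa using hmod z hz
  | succ r ih =>
    intro z hz
    have hσim := sigma_im a b c d hdet z hz
    have hσ := hasDerivAt_sigma a b c d hdet z hz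
    have hJne := denom_ne a b c d hdet z hz
    -- derivative of LHS
    have hFr : HasDerivAt (iteratedDeriv r f)
        (iteratedDeriv (r + 1) f (((a : ℂ) * z + b) / ((c : ℂ) * z + d)))
        (((a : ℂ) * z + b) / ((c : ℂ) * z + d)) := by
      rw [iteratedDeriv_succ]
      exact ((iterated_analytic f hf r) _ hσim).differentiableAt.hasDerivAt
    have hL : HasDerivAt (fun w : ℂ => iteratedDeriv r f (((a : ℂ) * w + b) / ((c : ℂ) * w + d)))
        (iteratedDeriv (r + 1) f (((a : ℂ) * z + b) / ((c : ℂ) * z + d)) *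
          ((((c : ℂ) * z + d) ^ 2)⁻¹)) z := by have := hFr.comp z hσ; exact this
    -- derivative of RHS
    have hR : HasDerivAt (fun w : ℂ => ∑ i ∈ range (r + 1), (rcα k r i : ℂ) * (c : ℂ) ^ (r - i) *
        ((c : ℂ) * w + d) ^ (2 * k + r + i) * iteratedDeriv i f w)
        (∑ i ∈ range (r + 1),
          ((rcα k r i : ℂ) * (c : ℂ) ^ (r - i) *
            (((2 * k + r + i : ℕ) : ℂ) * ((c : ℂ) * z + d) ^ (2 * k + r + i - 1) * c) *
              iteratedDeriv i f z +
          (rcα k r i : ℂ) * (c : ℂ) ^ (r - i) * ((c : ℂ) * z + d) ^ (2 * k + r + i) *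
            iteratedDeriv (i + 1) f z)) z := by
      apply HasDerivAt.fun_sum
      intro i _
      have hJ : HasDerivAt (fun w : ℂ => (c : ℂ) * w + d) c z := by
        simpa using ((hasDerivAt_id z).const_mul (c : ℂ)).add_const (d : ℂ)
      have hJp : HasDerivAt (fun w : ℂ => ((c : ℂ) * w + d) ^ (2 * k + r + i))
          (((2 * k + r + i : ℕ) : ℂ) * ((c : ℂ) * z + d) ^ (2 * k + r + i - 1) * c) z :=
        hJ.pow _
      have hFi : HasDerivAt (iteratedDeriv i f) (iteratedDeriv (i + 1) f z) z := by
        rw [iteratedDeriv_succ]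
        exact ((iterated_analytic f hf i) _ hz).differentiableAt.hasDerivAt
      have := (hJp.const_mul ((rcα k r i : ℂ) * (c : ℂ) ^ (r - i))).mul hFi
      refine this.congr_deriv ?_
      ring
    -- the two functions agree on the (open) upper half plane
    have hEq : (fun w : ℂ => iteratedDeriv r f (((a : ℂ) * w + b) / ((c : ℂ) * w + d))) =ᶠ[nhds z]
        (fun w : ℂ => ∑ i ∈ range (r + 1), (rcα k r i : ℂ) * (c : ℂ) ^ (r - i) *
          ((c : ℂ) * w + d) ^ (2 * k + r + i) * iteratedDeriv i f w) := by
      filter_upwards [upper_isOpen.mem_nhds hz] with w hw using ih w hw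
    have hL' := hL.congr_of_eventuallyEq hEq.symm
    have hder := hL'.unique hR
    -- multiply through by J^2
    have hmain : iteratedDeriv (r + 1) f (((a : ℂ) * z + b) / ((c : ℂ) * z + d)) =
        ∑ i ∈ range (r + 1), ((c : ℂ) * z + d) ^ 2 *
          ((rcα k r i : ℂ) * (c : ℂ) ^ (r - i) *
            (((2 * k + r + i : ℕ) : ℂ) * ((c : ℂ) * z + d) ^ (2 * k + r + i - 1) * c) *
              iteratedDeriv i f z +
          (rcα k r i : ℂ) * (c : ℂ) ^ (r - i) * ((c : ℂ) * z + d) ^ (2 * k + r + i) *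
            iteratedDeriv (i + 1) f z) := by
      rw [← Finset.mul_sum, ← hder]
      field_simp
      rw [mul_div_cancel_left₀ _ (by contrapose! hJne; linear_combination hJne)]
    rw [hmain]
    rw [← alg_step k r hk (c : ℂ) ((c : ℂ) * z + d) (fun i => iteratedDeriv i f z)]
    apply Finset.sum_congr rfl
    intro i hi
    simp only [Finset.mem_range] at hi
    have h1 : r + 1 - i = (r - i) + 1 := by omega
    have h2 : (2 * k + r + i - 1) + 2 = 2 * k + r + 1 + i := by omega
    have h3 : (2 * k + r + i) + 2 = 2 * k + r + i + 2 := by omega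
    rw [h1, pow_succ, ← h2, pow_add, ← h3, pow_add]
    push_cast
    ring

open Finset in
/-- If `f`, `g` are modular of weights `2k`, `2l` for `Γ ≤ SL₂(ℝ)`, then the n-th
Rankin-Cohen bracket `[f,g]_n` satisfies the modularity condition of weight `2k+2l+2n`. -/
theorem rankinCohen_modularity (k l n : ℕ) (hk : 1 ≤ k) (hl : 1 ≤ l)
    (Γ : Subgroup (Matrix.SpecialLinearGroup (Fin 2) ℝ))
    (f g : ℂ → ℂ)
    (hf : DifferentiableOn ℂ f {z : ℂ | 0 < z.im})
    (hg : DifferentiableOn ℂ g {z : ℂ | 0 < z.im})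
    (hfmod : ∀ γ ∈ Γ, ∀ z : ℂ, 0 < z.im →
      ((γ.1 1 0 : ℂ) * z + (γ.1 1 1 : ℂ)) ^ (-(2 * k : ℤ)) *
        f (((γ.1 0 0 : ℂ) * z + (γ.1 0 1 : ℂ)) / ((γ.1 1 0 : ℂ) * z + (γ.1 1 1 : ℂ))) = f z)
    (hgmod : ∀ γ ∈ Γ, ∀ z : ℂ, 0 < z.im →
      ((γ.1 1 0 : ℂ) * z + (γ.1 1 1 : ℂ)) ^ (-(2 * l : ℤ)) *
        g (((γ.1 0 0 : ℂ) * z + (γ.1 0 1 : ℂ)) / ((γ.1 1 0 : ℂ) * z + (γ.1 1 1 : ℂ))) = g z) :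
    ∀ γ ∈ Γ, ∀ z : ℂ, 0 < z.im →
      ((γ.1 1 0 : ℂ) * z + (γ.1 1 1 : ℂ)) ^ (-(2 * k + 2 * l + 2 * n : ℤ)) *
        (∑ r ∈ range (n + 1), (-1 : ℂ) ^ r *
          ((n + 2 * k - 1).choose (n - r)) * ((n + 2 * l - 1).choose r) *
          ((1 / (2 * Real.pi * Complex.I)) ^ r * iteratedDeriv r f
              (((γ.1 0 0 : ℂ) * z + (γ.1 0 1 : ℂ)) / ((γ.1 1 0 : ℂ) * z + (γ.1 1 1 : ℂ)))) *
          ((1 / (2 * Real.pi * Complex.I)) ^ (n - r) * iteratedDeriv (n - r) g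
              (((γ.1 0 0 : ℂ) * z + (γ.1 0 1 : ℂ)) / ((γ.1 1 0 : ℂ) * z + (γ.1 1 1 : ℂ))))) =
      ∑ r ∈ range (n + 1), (-1 : ℂ) ^ r *
        ((n + 2 * k - 1).choose (n - r)) * ((n + 2 * l - 1).choose r) *
        ((1 / (2 * Real.pi * Complex.I)) ^ r * iteratedDeriv r f z) *
        ((1 / (2 * Real.pi * Complex.I)) ^ (n - r) * iteratedDeriv (n - r) g z) := by
  intro γ hγ z hz
  set a : ℝ := γ.1 0 0 with ha
  set b : ℝ := γ.1 0 1 with hb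
  set c : ℝ := γ.1 1 0 with hc
  set d : ℝ := γ.1 1 1 with hd
  have hdet : a * d - b * c = 1 := by
    have := γ.2
    rw [Matrix.det_fin_two] at this
    exact this
  have hJne : (c : ℂ) * z + d ≠ 0 := denom_ne a b c d hdet z hz
  set P : ℂ := 1 / (2 * Real.pi * Complex.I) with hP
  set J : ℂ := (c : ℂ) * z + d with hJ
  set σz : ℂ := ((a : ℂ) * z + b) / ((c : ℂ) * z + d) with hσz
  -- it suffices to prove the multiplied-out statement
  have hcast : (-(2 * (k : ℤ) + 2 * l + 2 * n)) = -((2 * k + 2 * l + 2 * n : ℕ) : ℤ) := by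
    push_cast; ring
  rw [hcast, zpow_neg, zpow_natCast, inv_mul_eq_iff_eq_mul₀ (pow_ne_zero _ hJne)]
  -- modularity in multiplicative form
  have hmodf : ∀ w : ℂ, 0 < w.im →
      f (((a : ℂ) * w + b) / ((c : ℂ) * w + d)) = ((c : ℂ) * w + d) ^ (2 * k) * f w := by
    intro w hw
    have h := hfmod γ hγ w hw
    have hJw : (c : ℂ) * w + d ≠ 0 := denom_ne a b c d hdet w hw
    rw [show (-(2 * (k : ℤ))) = -((2 * k : ℕ) : ℤ) by push_cast; ring, zpow_neg, zpow_natCast,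
      inv_mul_eq_iff_eq_mul₀ (pow_ne_zero _ hJw)] at h
    exact h
  have hmodg : ∀ w : ℂ, 0 < w.im →
      g (((a : ℂ) * w + b) / ((c : ℂ) * w + d)) = ((c : ℂ) * w + d) ^ (2 * l) * g w := by
    intro w hw
    have h := hgmod γ hγ w hw
    have hJw : (c : ℂ) * w + d ≠ 0 := denom_ne a b c d hdet w hw
    rw [show (-(2 * (l : ℤ))) = -((2 * l : ℕ) : ℤ) by push_cast; ring, zpow_neg, zpow_natCast,
      inv_mul_eq_iff_eq_mul₀ (pow_ne_zero _ hJw)] at h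
    exact h
  have hF := transform k hk a b c d hdet f hf hmodf
  have hG := transform l hl a b c d hdet g hg hmodg
  -- triple sum expansion
  have hout : ∀ r ∈ range (n + 1),
      (-1 : ℂ) ^ r * ((n + 2 * k - 1).choose (n - r) : ℂ) * ((n + 2 * l - 1).choose r : ℂ) *
        (P ^ r * iteratedDeriv r f σz) * (P ^ (n - r) * iteratedDeriv (n - r) g σz) =
      ∑ i ∈ range (n + 1), ∑ j ∈ range (n + 1),
        ((-1 : ℂ) ^ r * ((n + 2 * k - 1).choose (n - r) : ℂ) *
            ((n + 2 * l - 1).choose r : ℂ) * P ^ n) *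
          (((rcα k r i : ℂ) * (c : ℂ) ^ (r - i) * J ^ (2 * k + r + i) * iteratedDeriv i f z) *
            ((rcα l (n - r) j : ℂ) * (c : ℂ) ^ (n - r - j) * J ^ (2 * l + (n - r) + j) *
              iteratedDeriv j g z)) := by
    intro r hr
    simp only [mem_range] at hr
    rw [hF r z hz, hG (n - r) z hz]
    have hsub1 : ∑ i ∈ range (r + 1), (rcα k r i : ℂ) * (c : ℂ) ^ (r - i) *
        J ^ (2 * k + r + i) * iteratedDeriv i f z =
        ∑ i ∈ range (n + 1), (rcα k r i : ℂ) * (c : ℂ) ^ (r - i) *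
        J ^ (2 * k + r + i) * iteratedDeriv i f z := by
      apply Finset.sum_subset (Finset.range_subset_range.mpr (by omega))
      intro i _ hi
      simp only [mem_range, not_lt] at hi
      rw [rcα_zero_of_lt (by omega) k]
      simp
    have hsub2 : ∑ j ∈ range ((n - r) + 1), (rcα l (n - r) j : ℂ) * (c : ℂ) ^ (n - r - j) *
        J ^ (2 * l + (n - r) + j) * iteratedDeriv j g z =
        ∑ j ∈ range (n + 1), (rcα l (n - r) j : ℂ) * (c : ℂ) ^ (n - r - j) *
        J ^ (2 * l + (n - r) + j) * iteratedDeriv j g z := by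
      apply Finset.sum_subset (Finset.range_subset_range.mpr (by omega))
      intro j _ hj
      simp only [mem_range, not_lt] at hj
      rw [rcα_zero_of_lt (by omega) l]
      simp
    rw [hsub1, hsub2]
    have hPn : P ^ r * P ^ (n - r) = P ^ n := by
      rw [← pow_add]
      congr 1
      omega
    calc (-1 : ℂ) ^ r * ((n + 2 * k - 1).choose (n - r) : ℂ) * ((n + 2 * l - 1).choose r : ℂ) *
        (P ^ r * ∑ i ∈ range (n + 1), (rcα k r i : ℂ) * (c : ℂ) ^ (r - i) *
          J ^ (2 * k + r + i) * iteratedDeriv i f z) *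
        (P ^ (n - r) * ∑ j ∈ range (n + 1), (rcα l (n - r) j : ℂ) * (c : ℂ) ^ (n - r - j) *
          J ^ (2 * l + (n - r) + j) * iteratedDeriv j g z)
        = ((-1 : ℂ) ^ r * ((n + 2 * k - 1).choose (n - r) : ℂ) *
            ((n + 2 * l - 1).choose r : ℂ) * P ^ n) *
          ((∑ i ∈ range (n + 1), (rcα k r i : ℂ) * (c : ℂ) ^ (r - i) *
            J ^ (2 * k + r + i) * iteratedDeriv i f z) *
          (∑ j ∈ range (n + 1), (rcα l (n - r) j : ℂ) * (c : ℂ) ^ (n - r - j) *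
            J ^ (2 * l + (n - r) + j) * iteratedDeriv j g z)) := by
          rw [← hPn]; ring
      _ = _ := by
          rw [Finset.sum_mul_sum, Finset.mul_sum]
          apply Finset.sum_congr rfl
          intro i _
          rw [Finset.mul_sum]
  rw [Finset.sum_congr rfl hout, Finset.sum_comm]
  -- inner sum evaluation
  have hinner : ∀ i ∈ range (n + 1), ∀ j ∈ range (n + 1),
      ∑ r ∈ range (n + 1),
        ((-1 : ℂ) ^ r * ((n + 2 * k - 1).choose (n - r) : ℂ) *
            ((n + 2 * l - 1).choose r : ℂ) * P ^ n) *
          (((rcα k r i : ℂ) * (c : ℂ) ^ (r - i) * J ^ (2 * k + r + i) * iteratedDeriv i f z) *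
            ((rcα l (n - r) j : ℂ) * (c : ℂ) ^ (n - r - j) * J ^ (2 * l + (n - r) + j) *
              iteratedDeriv j g z)) =
      if i + j = n then
        ((-1 : ℂ) ^ i * ((n + 2 * k - 1).choose (n - i) : ℂ) *
          ((n + 2 * l - 1).choose i : ℂ) * P ^ n) *
          (J ^ (2 * k + 2 * l + 2 * n) * (iteratedDeriv i f z * iteratedDeriv (n - i) g z))
      else 0 := by
    intro i hi j hj
    simp only [mem_range] at hi hj
    by_cases hij : i + j = n
    · rw [if_pos hij]
      rw [Finset.sum_eq_single i]
      · have h1 : rcα k i i = 1 := rcα_self k i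
        have h2 : rcα l (n - i) j = 1 := by
          rw [show j = n - i by omega]
          exact rcα_self l (n - i)
        have h3 : i - i = 0 := by omega
        have h4 : n - i - j = 0 := by omega
        have h5 : J ^ (2 * k + i + i) * J ^ (2 * l + (n - i) + j) =
            J ^ (2 * k + 2 * l + 2 * n) := by
          rw [← pow_add]
          congr 1
          omega
        have h6 : j = n - i := by omega
        subst h6
        rw [h1, h2, h3, show n - i - (n - i) = 0 from by omega,
          show 2 * k + 2 * l + 2 * n = (2 * k + i + i) + (2 * l + (n - i) + (n - i)) from by omega,
          pow_add]
        push_cast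
        ring
      · intro r hr hri
        simp only [mem_range] at hr
        rcases lt_or_gt_of_ne hri with h | h
        · rw [rcα_zero_of_lt (by omega : r < i) k]
          push_cast
          ring
        · rw [rcα_zero_of_lt (by omega : n - r < j) l]
          push_cast
          ring
      · intro h
        exact absurd (mem_range.mpr (by omega)) h
    · rw [if_neg hij]
      rcases lt_or_gt_of_ne hij with hlt | hgt
      · -- i + j < n : the alternating-sum cancellation
        have hterm : ∀ r ∈ range (n + 1),
            ((-1 : ℂ) ^ r * ((n + 2 * k - 1).choose (n - r) : ℂ) *
                ((n + 2 * l - 1).choose r : ℂ) * P ^ n) *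
              (((rcα k r i : ℂ) * (c : ℂ) ^ (r - i) * J ^ (2 * k + r + i) *
                  iteratedDeriv i f z) *
                ((rcα l (n - r) j : ℂ) * (c : ℂ) ^ (n - r - j) * J ^ (2 * l + (n - r) + j) *
                  iteratedDeriv j g z)) =
            ((-1 : ℂ) ^ r * ((n + 2 * k - 1).choose (n - r) : ℂ) *
              ((n + 2 * l - 1).choose r : ℂ) * (rcα k r i : ℂ) * (rcα l (n - r) j : ℂ)) *
              (P ^ n * (c : ℂ) ^ (n - i - j) * J ^ (2 * k + 2 * l + n + i + j) *
                iteratedDeriv i f z * iteratedDeriv j g z) := by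
          intro r hr
          simp only [mem_range] at hr
          rcases lt_or_ge r i with h | h
          · rw [rcα_zero_of_lt h k]
            push_cast
            ring
          · rcases lt_or_ge (n - r) j with h' | h'
            · rw [rcα_zero_of_lt h' l]
              push_cast
              ring
            · have hc1 : (c : ℂ) ^ (r - i) * (c : ℂ) ^ (n - r - j) = (c : ℂ) ^ (n - i - j) := by
                rw [← pow_add]
                congr 1
                omega
              have hJ1 : J ^ (2 * k + r + i) * J ^ (2 * l + (n - r) + j) =
                  J ^ (2 * k + 2 * l + n + i + j) := by
                rw [← pow_add]
                congr 1
                omega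
              rw [← hc1, ← hJ1]
              ring
        rw [Finset.sum_congr rfl hterm, ← Finset.sum_mul, comb_sum k l n i j hk hl hlt,
          zero_mul]
      · -- i + j > n : all terms vanish
        apply Finset.sum_eq_zero
        intro r hr
        simp only [mem_range] at hr
        rcases lt_or_ge r i with h | h
        · rw [rcα_zero_of_lt h k]
          push_cast
          ring
        · rw [rcα_zero_of_lt (by omega : n - r < j) l]
          push_cast
          ring
  -- now collapse the j-sum and conclude
  have hswap : ∀ i ∈ range (n + 1),
      ∑ j ∈ range (n + 1), ∑ r ∈ range (n + 1),
        ((-1 : ℂ) ^ r * ((n + 2 * k - 1).choose (n - r) : ℂ) *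
            ((n + 2 * l - 1).choose r : ℂ) * P ^ n) *
          (((rcα k r i : ℂ) * (c : ℂ) ^ (r - i) * J ^ (2 * k + r + i) * iteratedDeriv i f z) *
            ((rcα l (n - r) j : ℂ) * (c : ℂ) ^ (n - r - j) * J ^ (2 * l + (n - r) + j) *
              iteratedDeriv j g z)) =
      ((-1 : ℂ) ^ i * ((n + 2 * k - 1).choose (n - i) : ℂ) *
        ((n + 2 * l - 1).choose i : ℂ) * P ^ n) *
        (J ^ (2 * k + 2 * l + 2 * n) * (iteratedDeriv i f z * iteratedDeriv (n - i) g z)) := by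
    intro i hi
    simp only [mem_range] at hi
    rw [Finset.sum_congr rfl (fun j hj => hinner i (mem_range.mpr (by omega)) j hj)]
    rw [Finset.sum_eq_single (n - i)]
    · rw [if_pos (by omega)]
    · intro j hj hji
      rw [if_neg (by omega)]
    · intro h
      exact absurd (mem_range.mpr (by omega)) h
  rw [Finset.sum_congr rfl (fun i _ => Finset.sum_comm), Finset.sum_congr rfl hswap,
    Finset.mul_sum]
  apply Finset.sum_congr rfl
  intro i hi
  simp only [mem_range] at hi
  rw [show P ^ n = P ^ i * P ^ (n - i) from by rw [← pow_add]; congr 1; omega]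
  ring
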